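/- If l.n.sp.gldim(R) ≤ k, then for all m ≥ 0, all i ≥ m, every (n, k+m)-weak cotorsion right R-module M and every (n,k)-weak cotorsion right R-module N, one has Ext^{1+i}_R(M, N) = 0. -/

import Mathlib

/-!
Common definitions for formalizing "(n,k)-weak cotorsion modules" over an arbitrary
(not necessarily commutative) ring `R`.  Left `R`-modules are objects of
`ModuleCat R`, right `R`-modules are objects of `ModuleCat Rᵐᵒᵖ`.

Since Mathlib does not provide `Tor` of a right module with a left module over a
noncommutative ring, we encode the vanishing of `Tor_i^R(N, M)` (for `N` a right
module and `M` a left module) by the equivalent condition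
`Ext^i_{Rᵐᵒᵖ}(N, M⋆) = 0`, where `M⋆ = Hom_ℤ(M, ℚ/ℤ)` is the character module
(a right module).  This is equivalent because `ℚ/ℤ` is an injective cogenerator:
`Ext^i_{Rᵐᵒᵖ}(N, M⋆) ≅ (Tor_i^R(N, M))⋆`, and an abelian group vanishes iff its
character group does.
-/

open CategoryTheory

universe u

noncomputable section

/-- The character group `Hom_ℤ(N, ℚ/ℤ)`. -/
def CharGroup (N : Type u) [AddCommGroup N] : Type u := N →+ AddCircle (1 : ℚ)

instance (N : Type u) [AddCommGroup N] : AddCommGroup (CharGroup N) :=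
  inferInstanceAs (AddCommGroup (N →+ AddCircle (1 : ℚ)))

namespace CharGroup

variable {N : Type u} [AddCommGroup N]

/-- View an element of the character group as an additive monoid hom. -/
def toHom (f : CharGroup N) : N →+ AddCircle (1 : ℚ) := f

/-- Build an element of the character group from an additive monoid hom. -/
def ofHom (f : N →+ AddCircle (1 : ℚ)) : CharGroup N := f

theorem hom_ext {f g : CharGroup N} (h : ∀ m, toHom f m = toHom g m) : f = g :=
  AddMonoidHom.ext h

end CharGroup

open CharGroup in
/-- Left module structure on the character group of a right module. -/
instance charGroupModuleLeft (R : Type u) [Ring R] (N : Type u) [AddCommGroup N]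
    [Module Rᵐᵒᵖ N] : Module R (CharGroup N) where
  smul r f := ofHom ((toHom f).comp
    (AddMonoidHom.mk' (fun m => MulOpposite.op r • m) (fun a b => smul_add _ a b)))
  one_smul f := hom_ext fun m => by
    show toHom f (MulOpposite.op (1 : R) • m) = toHom f m
    rw [MulOpposite.op_one, one_smul]
  mul_smul r s f := hom_ext fun m => by
    show toHom f (MulOpposite.op (r * s) • m)
      = toHom f (MulOpposite.op s • MulOpposite.op r • m)
    rw [MulOpposite.op_mul, mul_smul]
  smul_zero r := CharGroup.hom_ext fun m => rfl
  smul_add r f g := CharGroup.hom_ext fun m => rfl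
  add_smul r s f := hom_ext fun m => by
    show toHom f (MulOpposite.op (r + s) • m)
      = toHom f (MulOpposite.op r • m) + toHom f (MulOpposite.op s • m)
    rw [MulOpposite.op_add, add_smul, map_add]
  zero_smul f := hom_ext fun m => by
    show toHom f (MulOpposite.op (0 : R) • m) = 0
    rw [MulOpposite.op_zero, zero_smul, map_zero]

open CharGroup in
/-- Right module structure on the character group of a left module. -/
instance charGroupModuleRight (R : Type u) [Ring R] (N : Type u) [AddCommGroup N]
    [Module R N] : Module Rᵐᵒᵖ (CharGroup N) where
  smul r f := ofHom ((toHom f).comp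
    (AddMonoidHom.mk' (fun m => r.unop • m) (fun a b => smul_add _ a b)))
  one_smul f := hom_ext fun m => by
    show toHom f ((1 : Rᵐᵒᵖ).unop • m) = toHom f m
    rw [MulOpposite.unop_one, one_smul]
  mul_smul r s f := hom_ext fun m => by
    show toHom f ((r * s).unop • m) = toHom f (s.unop • r.unop • m)
    rw [MulOpposite.unop_mul, mul_smul]
  smul_zero r := CharGroup.hom_ext fun m => rfl
  smul_add r f g := CharGroup.hom_ext fun m => rfl
  add_smul r s f := hom_ext fun m => by
    show toHom f ((r + s).unop • m) = toHom f (r.unop • m) + toHom f (s.unop • m)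
    rw [MulOpposite.unop_add, add_smul, map_add]
  zero_smul f := hom_ext fun m => by
    show toHom f ((0 : Rᵐᵒᵖ).unop • m) = 0
    rw [MulOpposite.unop_zero, zero_smul, map_zero]

variable (R : Type u) [Ring R]

/-- `extVanish S i A B` says that `Ext^i_S(A, B) = 0`. -/
def extVanish (S : Type u) [Ring S] (i : ℕ) (A B : ModuleCat.{u} S) : Prop :=
  Subsingleton (((Ext ℤ (ModuleCat.{u} S) i).obj (Opposite.op A)).obj B)

/-- The character module of a right `R`-module, as a left `R`-module. -/
def charLeft (N : ModuleCat.{u} Rᵐᵒᵖ) : ModuleCat.{u} R :=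
  ModuleCat.of R (CharGroup N)

/-- The character module of a left `R`-module, as a right `R`-module. -/
def charRight (M : ModuleCat.{u} R) : ModuleCat.{u} Rᵐᵒᵖ :=
  ModuleCat.of Rᵐᵒᵖ (CharGroup M)

/-- `torVanish R i N M` encodes `Tor_i^R(N, M) = 0` for a right module `N` and a
left module `M`, via the character module duality
`Ext^i_R(M, N⋆) ≅ (Tor_i^R(N, M))⋆`. -/
def torVanish (i : ℕ) (N : ModuleCat.{u} Rᵐᵒᵖ) (M : ModuleCat.{u} R) : Prop :=
  extVanish R i M (charLeft R N)

/-- `K` is a special super finitely presented `S`-module (for the parameter `n`):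
`K` is the image of `F_n → F_{n-1}` in a projective resolution
`⋯ → F_{n+1} → F_n → ⋯ → F_0 → U → 0` of some module `U` in which `F_i` is finitely
generated projective for all `i ≥ n`.  (For `n = 0` the distinguished module is `U`
itself, matching `Ext^{n+1}(U, -) ≅ Ext^1(K_{n-1}, -)`.) -/
def IsSpecialSFP (S : Type u) [Ring S] (n : ℕ) (K : ModuleCat.{u} S) : Prop :=
  ∃ (U : ModuleCat.{u} S) (F : ℕ → ModuleCat.{u} S)
    (d : ∀ i, F (i + 1) →ₗ[S] F i) (π : F 0 →ₗ[S] U),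
      (∀ i, Module.Projective S (F i)) ∧
      (∀ i, n ≤ i → Module.Finite S (F i)) ∧
      Function.Surjective π ∧ Function.Exact (d 0) π ∧
      (∀ i, Function.Exact (d (i + 1)) (d i)) ∧
      (if n = 0 then Nonempty ((K : Type u) ≃ₗ[S] U)
       else Nonempty ((K : Type u) ≃ₗ[S] LinearMap.range (d (n - 1))))

/-- The `n`-weak injective dimension of a left `S`-module `M` is at most `k`. -/
def nwidLE (S : Type u) [Ring S] (n k : ℕ) (M : ModuleCat.{u} S) : Prop :=
  ∀ K : ModuleCat.{u} S, IsSpecialSFP S n K → extVanish S (k + 1) K M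

/-- The `n`-weak flat dimension of a right `R`-module `N` is at most `k`:
`Tor_{k+1}^R(N, K) = 0` for every special super finitely presented left module `K`. -/
def nwfdLE (n k : ℕ) (N : ModuleCat.{u} Rᵐᵒᵖ) : Prop :=
  ∀ K : ModuleCat.{u} R, IsSpecialSFP R n K → torVanish R (k + 1) N K

/-- A right `R`-module `M` is `(n,k)`-weak cotorsion if `Ext^1(N, M) = 0` for every
right module `N` of `n`-weak flat dimension at most `k`. -/
def IsNKWeakCotorsion (n k : ℕ) (M : ModuleCat.{u} Rᵐᵒᵖ) : Prop :=
  ∀ N : ModuleCat.{u} Rᵐᵒᵖ, nwfdLE R n k N → extVanish Rᵐᵒᵖ 1 N M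

/-- Projective dimension at most `k`, via Ext vanishing. -/
def pdLE (S : Type u) [Ring S] (k : ℕ) (K : ModuleCat.{u} S) : Prop :=
  ∀ M : ModuleCat.{u} S, extVanish S (k + 1) K M

/-- Injective dimension at most `k`, via Ext vanishing. -/
def idLE (S : Type u) [Ring S] (k : ℕ) (M : ModuleCat.{u} S) : Prop :=
  ∀ N : ModuleCat.{u} S, extVanish S (k + 1) N M

/-- Flat dimension of a right module at most `k`, via Tor vanishing. -/
def fdLE (k : ℕ) (N : ModuleCat.{u} Rᵐᵒᵖ) : Prop :=
  ∀ A : ModuleCat.{u} R, torVanish R (k + 1) N A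

/-- `l.n.sp.gldim(R) ≤ k` : every special super finitely presented left module has
projective dimension at most `k`. -/
def lnspGldimLE (n k : ℕ) : Prop :=
  ∀ K : ModuleCat.{u} R, IsSpecialSFP R n K → pdLE R k K

/-- `w.gl.dim(R) ≤ k`. -/
def wGldimLE (k : ℕ) : Prop :=
  ∀ N : ModuleCat.{u} Rᵐᵒᵖ, fdLE R k N

/-- A right `R`-module `M` is `k`-cotorsion if `Ext^1(F, M) = 0` for every right
module `F` of flat dimension at most `k`. -/
def IsKCotorsion (k : ℕ) (M : ModuleCat.{u} Rᵐᵒᵖ) : Prop :=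
  ∀ F : ModuleCat.{u} Rᵐᵒᵖ, fdLE R k F → extVanish Rᵐᵒᵖ 1 F M

/-- `φ : E → D` is a `𝒞`-precover of `D`. -/
def IsPrecover (S : Type u) [Ring S] (𝒞 : ModuleCat.{u} S → Prop)
    (E D : ModuleCat.{u} S) (φ : E →ₗ[S] D) : Prop :=
  𝒞 E ∧ ∀ F : ModuleCat.{u} S, 𝒞 F → ∀ g : F →ₗ[S] D, ∃ h : F →ₗ[S] E, φ ∘ₗ h = g

/-- `φ : E → D` is a `𝒞`-cover of `D`. -/
def IsCover (S : Type u) [Ring S] (𝒞 : ModuleCat.{u} S → Prop)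
    (E D : ModuleCat.{u} S) (φ : E →ₗ[S] D) : Prop :=
  IsPrecover S 𝒞 E D φ ∧ ∀ g : E →ₗ[S] E, φ ∘ₗ g = φ → Function.Bijective g

/-- `f : X → F` is a `𝒞`-preenvelope of `X`. -/
def IsPreenvelope (S : Type u) [Ring S] (𝒞 : ModuleCat.{u} S → Prop)
    (X F : ModuleCat.{u} S) (f : X →ₗ[S] F) : Prop :=
  𝒞 F ∧ ∀ F' : ModuleCat.{u} S, 𝒞 F' → ∀ g : X →ₗ[S] F', ∃ h : F →ₗ[S] F', h ∘ₗ f = g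

/-- A module is reduced if it has no nonzero injective submodules. -/
def IsReducedModule (S : Type u) [Ring S] (M : ModuleCat.{u} S) : Prop :=
  ∀ N : Submodule S M, Module.Injective S N → N = ⊥

/-- `D` is an `m`-th cosyzygy of `M`: there is an exact sequence
`0 → M → E^0 → ⋯ → E^{m-1} → D → 0` with each `E^i` injective. -/
def IsCosyzygy (S : Type u) [Ring S] : ℕ → ModuleCat.{u} S → ModuleCat.{u} S → Prop
  | 0, M, D => Nonempty ((M : Type u) ≃ₗ[S] D)
  | m + 1, M, D => ∃ (C E : ModuleCat.{u} S), IsCosyzygy S m M C ∧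
      Module.Injective S E ∧
      ∃ (ι : C →ₗ[S] E) (p : E →ₗ[S] D),
        Function.Injective ι ∧ Function.Surjective p ∧ Function.Exact ι p


/-- A left `R`-module `F` is flat: `Tor_1(A, F) = 0` for every right module `A`
(encoded via character duality, as above). -/
def IsFlatModule (R : Type u) [Ring R] (F : ModuleCat.{u} R) : Prop :=
  ∀ A : ModuleCat.{u} Rᵐᵒᵖ, torVanish R 1 A F

end


noncomputable section Stmt16Aux

open CategoryTheory Limits

variable {S : Type u} [Ring S]

/-- The concrete extension (injectivity) property within `ModuleCat.{u} S`. -/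
def ExtProp (S : Type u) [Ring S] (N : ModuleCat.{u} S) : Prop :=
  ∀ (A B : ModuleCat.{u} S) (ι : A →ₗ[S] B), Function.Injective ι →
    ∀ f : A →ₗ[S] N, ∃ g : B →ₗ[S] N, g.comp ι = f

lemma subsingleton_of_isZero {T : Type*} [Ring T] {X : ModuleCat T} (h : IsZero X) :
    Subsingleton X := by
  refine ⟨fun a b => ?_⟩
  have hid : (𝟙 X : X ⟶ X) = 0 := by rw [← IsZero.iff_id_eq_zero] ; exact h
  calc a = (𝟙 X : X ⟶ X) a := rfl
    _ = (0 : X ⟶ X) a := by rw [hid]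
    _ = (𝟙 X : X ⟶ X) b := by rw [hid]; rfl
    _ = b := rfl

lemma extVanish_iff_exactAt (M N : ModuleCat.{u} S) (P : CategoryTheory.ProjectiveResolution M)
    (j : ℕ) :
    extVanish S j M N ↔ (P.complex.linearYonedaObj ℤ N).ExactAt j := by
  rw [HomologicalComplex.exactAt_iff_isZero_homology]
  constructor
  · intro h
    exact IsZero.of_iso (@ModuleCat.isZero_of_subsingleton _ _ _ h) (P.isoExt j N).symm
  · intro h
    exact subsingleton_of_isZero (IsZero.of_iso h (P.isoExt j N))

lemma extVanish_succ_of_extProp (N : ModuleCat.{u} S) (hN : ExtProp S N)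
    (M : ModuleCat.{u} S) (j : ℕ) :
    extVanish S (j + 1) M N := by
  obtain ⟨P⟩ := (inferInstance : CategoryTheory.HasProjectiveResolution M).out
  rw [extVanish_iff_exactAt M N P]
  set K := P.complex.linearYonedaObj ℤ N with hK
  rw [HomologicalComplex.exactAt_iff' K j (j+1) (j+2) (by simp) (by simp),
    ShortComplex.moduleCat_exact_iff]
  intro g hg
  set g' : P.complex.X (j+1) ⟶ N := g with hg'def
  have hg' : P.complex.d (j+2) (j+1) ≫ g' = 0 := hg
  set D : P.complex.X (j+1) →ₗ[S] P.complex.X j := (P.complex.d (j+1) j).hom with hD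
  have hker : LinearMap.ker D ≤ LinearMap.ker g'.hom := by
    intro x hx
    obtain ⟨y, hy⟩ := (ShortComplex.moduleCat_exact_iff _).1 (P.exact_succ j) x hx
    have : g' (P.complex.d (j+2) (j+1) y) = 0 := by
      have := ConcreteCategory.congr_hom hg' y
      simpa using this
    simpa [hy] using this
  set Q : ModuleCat.{u} S := ModuleCat.of S (P.complex.X (j+1) ⧸ LinearMap.ker D) with hQ
  set ιmap : Q →ₗ[S] P.complex.X j :=
    (LinearMap.range D).subtype.comp D.quotKerEquivRange.toLinearMap with hι
  have hinj : Function.Injective ιmap :=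
    (Submodule.injective_subtype _).comp D.quotKerEquivRange.injective
  set gbar : Q →ₗ[S] N := (LinearMap.ker D).liftQ g'.hom hker with hgbar
  obtain ⟨h, hh⟩ := hN Q (P.complex.X j) ιmap hinj gbar
  refine ⟨ModuleCat.ofHom h, ?_⟩
  show P.complex.d (j+1) j ≫ ModuleCat.ofHom h = g'
  refine ModuleCat.hom_ext (LinearMap.ext fun x => ?_)
  have h1 : ιmap (Submodule.Quotient.mk x) = D x := rfl
  have h2 : h (ιmap (Submodule.Quotient.mk x))
      = gbar (Submodule.Quotient.mk x) := LinearMap.congr_fun hh _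
  show h (D x) = g'.hom x
  rw [← h1, h2]
  rfl

lemma extProp_of_extVanish_one (N : ModuleCat.{u} S)
    (H : ∀ X : ModuleCat.{u} S, extVanish S 1 X N) : ExtProp S N := by
  intro A B ι hι f
  set Cmod : ModuleCat.{u} S := ModuleCat.of S (B ⧸ LinearMap.range ι) with hCmod
  set p : B →ₗ[S] Cmod := (LinearMap.range ι).mkQ with hp
  obtain ⟨P⟩ := (inferInstance : CategoryTheory.HasProjectiveResolution Cmod).out
  set π0 : P.complex.X 0 ⟶ Cmod := P.π.f 0 with hπ0
  have hpe : CategoryTheory.Epi (ModuleCat.ofHom p) :=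
    (ModuleCat.epi_iff_surjective _).2 (Submodule.mkQ_surjective _)
  set σ : P.complex.X 0 ⟶ B :=
    CategoryTheory.Projective.factorThru π0 (ModuleCat.ofHom p) with hσdef
  have hσ : σ ≫ (ModuleCat.ofHom p) = π0 := CategoryTheory.Projective.factorThru_comp _ _
  have hπ0surj : Function.Surjective π0 := (ModuleCat.epi_iff_surjective π0).1 (show Epi (P.π.f 0) from inferInstance)
  set d10 : P.complex.X 1 ⟶ P.complex.X 0 := P.complex.d 1 0 with hd10
  set u : P.complex.X 1 →ₗ[S] B := σ.hom.comp d10.hom with hu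
  have humem : ∀ x, u x ∈ LinearMap.range ι := by
    intro x
    have h1 : p (u x) = π0 (d10 x) := ConcreteCategory.congr_hom hσ (d10 x)
    have h2 : π0 (d10 x) = 0 := ConcreteCategory.congr_hom P.complex_d_comp_π_f_zero x
    have h3 : p (u x) = 0 := h1.trans h2
    exact (Submodule.Quotient.mk_eq_zero _).1 h3
  set t : P.complex.X 1 →ₗ[S] LinearMap.range ι := LinearMap.codRestrict _ u humem with ht
  set e : A ≃ₗ[S] LinearMap.range ι := LinearEquiv.ofInjective ι hι with he
  set f' : LinearMap.range ι →ₗ[S] N := f.comp e.symm.toLinearMap with hf'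
  set g1 : P.complex.X 1 ⟶ N := ModuleCat.ofHom (f'.comp t) with hg1
  have hex : (P.complex.linearYonedaObj ℤ N).ExactAt 1 :=
    (extVanish_iff_exactAt Cmod N P 1).1 (H Cmod)
  rw [HomologicalComplex.exactAt_iff' _ 0 1 2 (by simp) (by simp),
    ShortComplex.moduleCat_exact_iff] at hex
  have hcycle : P.complex.d 2 1 ≫ g1 = 0 := by
    refine ModuleCat.hom_ext (LinearMap.ext fun y => ?_)
    have h4 : u (P.complex.d 2 1 y) = 0 := by
      show σ.hom (d10 (P.complex.d 2 1 y)) = 0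
      have h5 : d10 (P.complex.d 2 1 y) = 0 := ConcreteCategory.congr_hom (P.complex.d_comp_d 2 1 0) y
      rw [h5, map_zero]
    have hty : t (P.complex.d 2 1 y) = 0 := Subtype.ext h4
    show f' (t (P.complex.d 2 1 y)) = 0
    rw [hty, map_zero]
  obtain ⟨h0, hh⟩ := hex g1 hcycle
  set h : P.complex.X 0 ⟶ N := h0 with hhdef
  have hh' : d10 ≫ h = g1 := hh
  have hS0 : (CategoryTheory.ShortComplex.mk d10 π0 P.complex_d_comp_π_f_zero).Exact :=
    CategoryTheory.ShortComplex.exact_of_g_is_cokernel _ P.isColimitCokernelCofork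
  rw [ShortComplex.moduleCat_exact_iff] at hS0
  set ψ : (A × P.complex.X 0) →ₗ[S] B := ι.coprod σ.hom with hψdef
  have hψ : Function.Surjective ψ := by
    intro b
    obtain ⟨x, hx⟩ := hπ0surj (p b)
    have h1 : p (σ x) = π0 x := ConcreteCategory.congr_hom hσ x
    have h5 : p (b - σ x) = 0 := by rw [map_sub, h1, hx, sub_self]
    obtain ⟨a, ha⟩ : b - σ x ∈ LinearMap.range ι := (Submodule.Quotient.mk_eq_zero _).1 h5
    refine ⟨(a, x), ?_⟩
    show ι a + σ.hom x = b
    rw [ha]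
    abel
  set φ : (A × P.complex.X 0) →ₗ[S] N := f.coprod h.hom with hφdef
  have hkerψ : LinearMap.ker ψ ≤ LinearMap.ker φ := by
    rintro ⟨a, x⟩ hax
    have hax' : ι a + σ.hom x = 0 := LinearMap.mem_ker.1 hax
    have hσx : σ.hom x = ι (-a) := by
      rw [map_neg]
      exact eq_neg_of_add_eq_zero_right hax'
    have hπx : π0 x = 0 := by
      have h1 : p (σ.hom x) = π0 x := ConcreteCategory.congr_hom hσ x
      have h2 : p (ι (-a)) = 0 :=
        (Submodule.Quotient.mk_eq_zero _).2 (LinearMap.mem_range.2 ⟨-a, rfl⟩)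
      rw [← h1, hσx, h2]
    obtain ⟨y, hy⟩ := hS0 x hπx
    have hty : t y = e (-a) := by
      apply Subtype.ext
      show u y = ((e (-a) : LinearMap.range ι) : B)
      rw [he, LinearEquiv.ofInjective_apply]
      show σ.hom (d10 y) = ι (-a)
      rw [hy, hσx]
    have hhx : h.hom x = f (-a) := by
      rw [← hy]
      have h6 : h.hom (d10 y) = g1 y := ConcreteCategory.congr_hom hh' y
      rw [h6]
      show f' (t y) = f (-a)
      rw [hty, hf']
      show f (e.symm (e (-a))) = f (-a)
      rw [LinearEquiv.symm_apply_apply]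
    have h7 : φ (a, x) = f a + h.hom x := rfl
    rw [LinearMap.mem_ker, h7, hhx, map_neg]
    abel
  set E := ψ.quotKerEquivOfSurjective hψ with hE
  refine ⟨((LinearMap.ker ψ).liftQ φ hkerψ).comp E.symm.toLinearMap, ?_⟩
  refine LinearMap.ext fun a => ?_
  have hEa : E.symm (ι a) = Submodule.Quotient.mk (a, 0) := by
    rw [LinearEquiv.symm_apply_eq]
    show ι a = ψ (a, 0)
    show ι a = ι a + σ.hom 0
    rw [map_zero, add_zero]
  show ((LinearMap.ker ψ).liftQ φ hkerψ) (E.symm (ι a)) = f a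
  rw [hEa, Submodule.liftQ_apply]
  show f a + h.hom 0 = f a
  rw [map_zero, add_zero]

end Stmt16Aux

/-- if `l.n.sp.gldim(R) ≤ k`, then `Ext^{1+i}(M, N) = 0` for all
`i ≥ m`, all `(n, k+m)`-weak cotorsion `M` and all `(n,k)`-weak cotorsion `N`. -/
theorem stmt16 (R : Type u) [Ring R] (n k : ℕ) (h : lnspGldimLE R n k)
    (m i : ℕ) (him : m ≤ i) (M N : ModuleCat.{u} Rᵐᵒᵖ)
    (hM : IsNKWeakCotorsion R n (k + m) M) (hN : IsNKWeakCotorsion R n k N) :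
    extVanish Rᵐᵒᵖ (1 + i) M N := by
  have hall : ∀ X : ModuleCat.{u} Rᵐᵒᵖ, nwfdLE R n k X := fun X K hK => h K hK (charLeft R X)
  have hext1 : ∀ X : ModuleCat.{u} Rᵐᵒᵖ, extVanish Rᵐᵒᵖ 1 X N := fun X => hN X (hall X)
  have hEP : ExtProp Rᵐᵒᵖ N := extProp_of_extVanish_one N hext1
  have hfin := extVanish_succ_of_extProp N hEP M i
  rwa [Nat.add_comm i 1] at hfin
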